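/- Let G be a graph with an independent module I of size at least 4, and let G' be obtained from G by deleting all but 3 vertices of I. Then there exists S ⊆ V(G) such that complementing the induced subgraph on S makes G paw-free, if and only if there exists S' ⊆ V(G') such that complementing the induced subgraph on S' makes G' paw-free. -/

import Mathlib

/-- A set `X` is a module of `G` if every vertex outside `X` is adjacent to all of `X`
or to none of `X`. -/
def IsModule {V : Type*} (G : SimpleGraph V) (X : Set V) : Prop :=
  ∀ c ∉ X, (∀ v ∈ X, G.Adj c v) ∨ (∀ v ∈ X, ¬ G.Adj c v)

/-- Subgraph complementation: `scomp G S` flips the adjacency of every pair of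
distinct vertices inside `S`, keeping all other adjacencies. -/
def scomp {V : Type*} (G : SimpleGraph V) (S : Set V) : SimpleGraph V where
  Adj a b := a ≠ b ∧
    ((a ∈ S ∧ b ∈ S ∧ ¬ G.Adj a b) ∨ (¬ (a ∈ S ∧ b ∈ S) ∧ G.Adj a b))
  symm := by
    constructor
    rintro a b ⟨hne, h⟩
    refine ⟨hne.symm, ?_⟩
    rcases h with ⟨ha, hb, hn⟩ | ⟨hn, hadj⟩
    · exact Or.inl ⟨hb, ha, fun h => hn h.symm⟩
    · exact Or.inr ⟨fun h => hn ⟨h.2, h.1⟩, hadj.symm⟩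
  loopless := ⟨fun a h => h.1 rfl⟩

/-- The paw graph: a triangle `{0,1,2}` plus the vertex `3` adjacent to `0`. -/
def pawGraph : SimpleGraph (Fin 4) :=
  SimpleGraph.fromRel (fun a b =>
    (a = 0 ∧ b = 1) ∨ (a = 0 ∧ b = 2) ∨ (a = 1 ∧ b = 2) ∨ (a = 0 ∧ b = 3))

/-- Let `G` have an independent module `I` of size at least 4, and let `G'` be obtained
from `G` by deleting all but 3 vertices of `I` (keeping `J ⊆ I` with `|J| = 3`).
Then some subgraph complementation makes `G` paw-free iff some subgraph
complementation makes `G'` paw-free. -/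
instance : DecidableRel pawGraph.Adj := fun a b =>
  decidable_of_iff' _ (SimpleGraph.fromRel_adj _ a b)

lemma factA : ∀ k l : Fin 4, k ≠ l → ¬pawGraph.Adj k l →
    (∀ m, m ≠ k → m ≠ l → (pawGraph.Adj k m ↔ pawGraph.Adj l m)) → False := by decide

lemma factB : ∀ k l m : Fin 4, k ≠ l → k ≠ m → l ≠ m →
    pawGraph.Adj k l → pawGraph.Adj k m → pawGraph.Adj l m →
    (∀ w, w ≠ k → w ≠ l → (pawGraph.Adj k w ↔ pawGraph.Adj l w)) →
    (∀ w, w ≠ k → w ≠ m → (pawGraph.Adj k w ↔ pawGraph.Adj m w)) → False := by decide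

lemma scomp_adj {V : Type*} (G : SimpleGraph V) (S : Set V) (a b : V) :
    (scomp G S).Adj a b ↔ a ≠ b ∧
      ((a ∈ S ∧ b ∈ S ∧ ¬ G.Adj a b) ∨ (¬ (a ∈ S ∧ b ∈ S) ∧ G.Adj a b)) := Iff.rfl

lemma scomp_induce_adj {V : Type*} (G : SimpleGraph V) (W : Set V) (S : Set V)
    (a b : W) :
    (scomp (G.induce W) {v : W | ↑v ∈ S}).Adj a b ↔ (scomp G S).Adj ↑a ↑b := by
  simp only [scomp_adj, Set.mem_setOf_eq, SimpleGraph.comap_adj, SimpleGraph.induce,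
    ne_eq, Subtype.ext_iff]
  tauto

section Twin
variable {V : Type*} {G : SimpleGraph V} {I : Set V} {S : Set V}

lemma adj_eq_of_mem (hmod : IsModule G I) (hind : I.Pairwise (fun a b => ¬ G.Adj a b))
    {x y : V} (hx : x ∈ I) (hy : y ∈ I) (w : V) (hwx : w ≠ x) (hwy : w ≠ y) :
    (G.Adj x w ↔ G.Adj y w) := by
  by_cases hw : w ∈ I
  · constructor
    · intro h; exact absurd h (hind hx hw (Ne.symm hwx))
    · intro h; exact absurd h (hind hy hw (Ne.symm hwy))
  · rcases hmod w hw with h | h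
    · exact iff_of_true (h x hx).symm (h y hy).symm
    · constructor <;> intro hh
      · exact absurd hh.symm (h x hx)
      · exact absurd hh.symm (h y hy)

lemma twin_scomp (hmod : IsModule G I) (hind : I.Pairwise (fun a b => ¬ G.Adj a b))
    {x y : V} (hx : x ∈ I) (hy : y ∈ I) (hxy : x ∈ S ↔ y ∈ S)
    (w : V) (hwx : w ≠ x) (hwy : w ≠ y) :
    ((scomp G S).Adj x w ↔ (scomp G S).Adj y w) := by
  have hg := adj_eq_of_mem hmod hind hx hy w hwx hwy
  rw [scomp_adj, scomp_adj]
  have h1 : x ≠ w := Ne.symm hwx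
  have h2 : y ≠ w := Ne.symm hwy
  tauto

lemma inner_not_mem (hind : I.Pairwise (fun a b => ¬ G.Adj a b))
    {x y : V} (hx : x ∈ I) (hy : y ∈ I) (hxs : x ∉ S) (hxy : x ≠ y) :
    ¬ (scomp G S).Adj x y := by
  rw [scomp_adj]
  have := hind hx hy hxy
  tauto

lemma inner_mem (hind : I.Pairwise (fun a b => ¬ G.Adj a b))
    {x y : V} (hx : x ∈ I) (hy : y ∈ I) (hxs : x ∈ S) (hys : y ∈ S) (hxy : x ≠ y) :
    (scomp G S).Adj x y := by
  rw [scomp_adj]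
  have := hind hx hy hxy
  tauto

end Twin

lemma pull {V : Type*} {H : SimpleGraph V} (e : pawGraph ↪g H) {k l : Fin 4}
    (h : ∀ w, w ≠ e k → w ≠ e l → (H.Adj (e k) w ↔ H.Adj (e l) w)) :
    ∀ m, m ≠ k → m ≠ l → (pawGraph.Adj k m ↔ pawGraph.Adj l m) := by
  intro m hmk hml
  rw [← e.map_rel_iff, ← e.map_rel_iff]
  exact h (e m) (fun h' => hmk (e.injective h')) (fun h' => hml (e.injective h'))

section Subst
variable {V : Type*} {H : SimpleGraph V} {T : Set V} {ε : Prop}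

lemma subst_half
    (htwin : ∀ x ∈ T, ∀ y ∈ T, ∀ w, w ≠ x → w ≠ y → (H.Adj x w ↔ H.Adj y w))
    (hinner : ∀ x ∈ T, ∀ y ∈ T, x ≠ y → (H.Adj x y ↔ ε))
    {e σ : Fin 4 → V} (hσ : ∀ k, σ k = e k ∨ (e k ∈ T ∧ σ k ∈ T))
    (hinjσ : Function.Injective σ) (hinje : Function.Injective e)
    {k l : Fin 4} (hkl : k ≠ l) (hl : σ l = e l) :
    (H.Adj (σ k) (σ l) ↔ H.Adj (e k) (e l)) := by
  rcases hσ k with hk | ⟨hekT, hσkT⟩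
  · rw [hk, hl]
  · by_cases helT : e l ∈ T
    · rw [hinner (σ k) hσkT (σ l) (hl ▸ helT) (fun h => hkl (hinjσ h)),
        hinner (e k) hekT (e l) helT (fun h => hkl (hinje h))]
    · rw [hl]
      exact htwin (σ k) hσkT (e k) hekT (e l)
        (fun h => helT (h ▸ hσkT)) (fun h => hkl (hinje h.symm))

lemma subst_adj
    (htwin : ∀ x ∈ T, ∀ y ∈ T, ∀ w, w ≠ x → w ≠ y → (H.Adj x w ↔ H.Adj y w))
    (hinner : ∀ x ∈ T, ∀ y ∈ T, x ≠ y → (H.Adj x y ↔ ε))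
    {e σ : Fin 4 → V} (hσ : ∀ k, σ k = e k ∨ (e k ∈ T ∧ σ k ∈ T))
    (hinjσ : Function.Injective σ) (hinje : Function.Injective e)
    {k l : Fin 4} (hkl : k ≠ l) :
    (H.Adj (σ k) (σ l) ↔ H.Adj (e k) (e l)) := by
  rcases hσ l with hl | ⟨helT, hσlT⟩
  · exact subst_half htwin hinner hσ hinjσ hinje hkl hl
  · rcases hσ k with hk | ⟨hekT, hσkT⟩
    · rw [H.adj_comm (σ k) (σ l), H.adj_comm (e k) (e l)]
      exact subst_half htwin hinner hσ hinjσ hinje (Ne.symm hkl) hk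
    · rw [hinner (σ k) hσkT (σ l) hσlT (fun h => hkl (hinjσ h)),
        hinner (e k) hekT (e l) helT (fun h => hkl (hinje h))]

end Subst

lemma transfer {V : Type*} (G : SimpleGraph V) (W S : Set V)
    (e : pawGraph ↪g scomp G S) (σ : Fin 4 → V) (hinj : Function.Injective σ)
    (hW : ∀ k, σ k ∈ W)
    (hadj : ∀ k l, k ≠ l → ((scomp G S).Adj (σ k) (σ l) ↔ (scomp G S).Adj (e k) (e l))) :
    Nonempty (pawGraph ↪g scomp (G.induce W) {v : W | ↑v ∈ S}) := by
  refine ⟨⟨⟨fun k => ⟨σ k, hW k⟩, ?_⟩, ?_⟩⟩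
  · intro a b h
    exact hinj (congrArg Subtype.val h)
  · intro a b
    show (scomp (G.induce W) {v : W | ↑v ∈ S}).Adj ⟨σ a, hW a⟩ ⟨σ b, hW b⟩ ↔ pawGraph.Adj a b
    rw [scomp_induce_adj]
    by_cases hab : a = b
    · subst hab
      exact iff_of_false ((scomp G S).irrefl) (pawGraph.irrefl)
    · rw [hadj a b hab, e.map_rel_iff]

lemma inj_one_subst {β : Type*} (e : Fin 4 → β) (he : Function.Injective e)
    (k₀ : Fin 4) (a : β) (ha : ∀ m, m ≠ k₀ → e m ≠ a) :
    Function.Injective (fun k => if k = k₀ then a else e k) := by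
  intro x y hxy
  dsimp only at hxy
  by_cases hx : x = k₀ <;> by_cases hy : y = k₀
  · rw [hx, hy]
  · rw [if_pos hx, if_neg hy] at hxy; exact absurd hxy.symm (ha y hy)
  · rw [if_neg hx, if_pos hy] at hxy; exact absurd hxy (ha x hx)
  · rw [if_neg hx, if_neg hy] at hxy; exact he hxy

lemma inj_two_subst {β : Type*} (e : Fin 4 → β) (he : Function.Injective e)
    (k₀ l₀ : Fin 4) (hk₀l₀ : k₀ ≠ l₀) (a b : β) (hab : a ≠ b)
    (ha : ∀ m, m ≠ k₀ → m ≠ l₀ → e m ≠ a) (hb : ∀ m, m ≠ k₀ → m ≠ l₀ → e m ≠ b) :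
    Function.Injective (fun k => if k = k₀ then a else if k = l₀ then b else e k) := by
  intro x y hxy
  dsimp only at hxy
  by_cases hx : x = k₀ <;> by_cases hy : y = k₀
  · rw [hx, hy]
  · rw [if_pos hx, if_neg hy] at hxy
    by_cases hy2 : y = l₀
    · rw [if_pos hy2] at hxy; exact absurd hxy hab
    · rw [if_neg hy2] at hxy; exact absurd hxy.symm (ha y hy hy2)
  · rw [if_neg hx, if_pos hy] at hxy
    by_cases hx2 : x = l₀
    · rw [if_pos hx2] at hxy; exact absurd hxy.symm hab
    · rw [if_neg hx2] at hxy; exact absurd hxy (ha x hx hx2)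
  · rw [if_neg hx, if_neg hy] at hxy
    by_cases hx2 : x = l₀ <;> by_cases hy2 : y = l₀
    · rw [hx2, hy2]
    · rw [if_pos hx2, if_neg hy2] at hxy; exact absurd hxy.symm (hb y hy hy2)
    · rw [if_neg hx2, if_pos hy2] at hxy; exact absurd hxy (hb x hx hx2)
    · rw [if_neg hx2, if_neg hy2] at hxy; exact he hxy

theorem stmt15 {V : Type*} (G : SimpleGraph V) (I : Set V)
    (hmod : IsModule G I) (hind : I.Pairwise (fun a b => ¬ G.Adj a b))
    (h4 : 4 ≤ I.ncard)
    (J : Set V) (hJ : J ⊆ I) (hJ3 : J.ncard = 3) :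
    (∃ S : Set V, IsEmpty (pawGraph ↪g scomp G S)) ↔
    (∃ S' : Set ((I \ J)ᶜ : Set V),
      IsEmpty (pawGraph ↪g scomp (G.induce ((I \ J)ᶜ : Set V)) S')) := by
  classical
  set W : Set V := (I \ J)ᶜ with hWdef
  constructor
  · rintro ⟨S, hS⟩
    refine ⟨{v : W | ↑v ∈ S}, ⟨fun e => hS.false
      (e.trans ⟨⟨Subtype.val, Subtype.val_injective⟩,
        fun {x y} => (scomp_induce_adj G W S x y).symm⟩)⟩⟩
  · rintro ⟨S', hS'⟩
    obtain ⟨a, b, c, hab, hac, hbc, hJabc⟩ := Set.ncard_eq_three.mp hJ3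
    have haJ : a ∈ J := by rw [hJabc]; simp
    have hbJ : b ∈ J := by rw [hJabc]; simp
    set Sv : Set V := Subtype.val '' S' with hSvdef
    have hSvnotIJ : ∀ x ∈ Sv, x ∉ I \ J := by
      rintro x ⟨v, hv, rfl⟩
      exact v.2
    by_cases hc : ∀ j ∈ J, j ∈ Sv
    · -- all kept module vertices are in the complementation set
      refine ⟨Sv ∪ (I \ J), ⟨fun e => ?_⟩⟩
      have hIS : ∀ x ∈ I, x ∈ Sv ∪ (I \ J) := by
        intro x hx
        by_cases hxJ : x ∈ J
        · exact Or.inl (hc x hxJ)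
        · exact Or.inr ⟨hx, hxJ⟩
      have htwin : ∀ x ∈ I, ∀ y ∈ I, ∀ w, w ≠ x → w ≠ y →
          ((scomp G (Sv ∪ (I \ J))).Adj x w ↔ (scomp G (Sv ∪ (I \ J))).Adj y w) :=
        fun x hx y hy w h1 h2 =>
          twin_scomp hmod hind hx hy (iff_of_true (hIS x hx) (hIS y hy)) w h1 h2
      have hinner : ∀ x ∈ I, ∀ y ∈ I, x ≠ y →
          ((scomp G (Sv ∪ (I \ J))).Adj x y ↔ True) :=
        fun x hx y hy hxy =>
          iff_of_true (inner_mem hind hx hy (hIS x hx) (hIS y hy) hxy) trivial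
      have keyI : ∀ k l m : Fin 4, k ≠ l → k ≠ m → l ≠ m →
          e k ∈ I → e l ∈ I → e m ∈ I → False := by
        intro k l m hkl hkm hlm hk hl hm
        refine factB k l m hkl hkm hlm ?_ ?_ ?_ ?_ ?_
        · exact e.map_rel_iff.mp (inner_mem hind hk hl (hIS _ hk) (hIS _ hl)
            (fun h => hkl (e.injective h)))
        · exact e.map_rel_iff.mp (inner_mem hind hk hm (hIS _ hk) (hIS _ hm)
            (fun h => hkm (e.injective h)))
        · exact e.map_rel_iff.mp (inner_mem hind hl hm (hIS _ hl) (hIS _ hm)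
            (fun h => hlm (e.injective h)))
        · exact pull e (fun w h1 h2 => htwin (e k) hk (e l) hl w h1 h2)
        · exact pull e (fun w h1 h2 => htwin (e k) hk (e m) hm w h1 h2)
      have hset : {v : W | ↑v ∈ Sv ∪ (I \ J)} = S' := by
        ext v
        simp only [Set.mem_setOf_eq, Set.mem_union]
        constructor
        · rintro (h | h)
          · exact (Subtype.val_injective.mem_set_image).mp h
          · exact absurd h v.2
        · intro h
          exact Or.inl ⟨v, h, rfl⟩
      by_cases hP : ∃ k, e k ∈ I \ J
      · obtain ⟨k₀, hk₀⟩ := hP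
        by_cases hP2 : ∃ l, l ≠ k₀ ∧ e l ∈ I \ J
        · obtain ⟨l₀, hl₀ne, hl₀⟩ := hP2
          have hnot : ∀ m, m ≠ k₀ → m ≠ l₀ → e m ∉ I := fun m h1 h2 hm =>
            keyI k₀ l₀ m (Ne.symm hl₀ne) (Ne.symm h1) (Ne.symm h2) hk₀.1 hl₀.1 hm
          have hfra : ∀ m, m ≠ k₀ → m ≠ l₀ → e m ≠ a := fun m h1 h2 h =>
            hnot m h1 h2 (by rw [h]; exact hJ haJ)
          have hfrb : ∀ m, m ≠ k₀ → m ≠ l₀ → e m ≠ b := fun m h1 h2 h =>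
            hnot m h1 h2 (by rw [h]; exact hJ hbJ)
          set σ : Fin 4 → V :=
            fun k => if k = k₀ then a else if k = l₀ then b else e k with hσdef
          have hinjσ : Function.Injective σ :=
            inj_two_subst e e.injective k₀ l₀ (Ne.symm hl₀ne) a b hab hfra hfrb
          have hσ : ∀ k, σ k = e k ∨ ((e k : V) ∈ I ∧ σ k ∈ I) := by
            intro k
            by_cases h1 : k = k₀
            · refine Or.inr ⟨h1 ▸ hk₀.1, ?_⟩
              rw [hσdef]; simp only [if_pos h1]; exact hJ haJ
            · by_cases h2 : k = l₀
              · refine Or.inr ⟨h2 ▸ hl₀.1, ?_⟩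
                rw [hσdef]; simp only [if_neg h1, if_pos h2]; exact hJ hbJ
              · left; rw [hσdef]; simp only [if_neg h1, if_neg h2]
          have hWσ : ∀ k, σ k ∈ W := by
            intro k
            rw [hσdef]
            by_cases h1 : k = k₀
            · simp only [if_pos h1]; exact fun h => h.2 haJ
            · by_cases h2 : k = l₀
              · simp only [if_neg h1, if_pos h2]; exact fun h => h.2 hbJ
              · simp only [if_neg h1, if_neg h2]; exact fun h => hnot k h1 h2 h.1
          obtain ⟨emb⟩ := transfer G W (Sv ∪ (I \ J)) e σ hinjσ hWσ
            (fun k l hkl => subst_adj htwin hinner hσ hinjσ e.injective hkl)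
          rw [hset] at emb
          exact hS'.false emb
        · push_neg at hP2
          have hfresh : ∃ j ∈ J, ∀ m, m ≠ k₀ → e m ≠ j := by
            by_cases h1 : ∀ m, m ≠ k₀ → e m ≠ a
            · exact ⟨a, haJ, h1⟩
            · push_neg at h1
              obtain ⟨m₁, hm₁, hem₁⟩ := h1
              by_cases h2 : ∀ m, m ≠ k₀ → e m ≠ b
              · exact ⟨b, hbJ, h2⟩
              · push_neg at h2
                obtain ⟨m₂, hm₂, hem₂⟩ := h2
                have hm12 : m₁ ≠ m₂ := fun h => hab (by rw [← hem₁, h, hem₂])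
                exact (keyI k₀ m₁ m₂ (Ne.symm hm₁) (Ne.symm hm₂) hm12 hk₀.1
                  (by rw [hem₁]; exact hJ haJ) (by rw [hem₂]; exact hJ hbJ)).elim
          obtain ⟨j, hjJ, hjfresh⟩ := hfresh
          set σ : Fin 4 → V := fun k => if k = k₀ then j else e k with hσdef
          have hinjσ : Function.Injective σ :=
            inj_one_subst e e.injective k₀ j hjfresh
          have hσ : ∀ k, σ k = e k ∨ ((e k : V) ∈ I ∧ σ k ∈ I) := by
            intro k
            by_cases h1 : k = k₀
            · refine Or.inr ⟨h1 ▸ hk₀.1, ?_⟩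
              rw [hσdef]; simp only [if_pos h1]; exact hJ hjJ
            · left; rw [hσdef]; simp only [if_neg h1]
          have hWσ : ∀ k, σ k ∈ W := by
            intro k
            rw [hσdef]
            by_cases h1 : k = k₀
            · simp only [if_pos h1]; exact fun h => h.2 hjJ
            · simp only [if_neg h1]; exact hP2 k h1
          obtain ⟨emb⟩ := transfer G W (Sv ∪ (I \ J)) e σ hinjσ hWσ
            (fun k l hkl => subst_adj htwin hinner hσ hinjσ e.injective hkl)
          rw [hset] at emb
          exact hS'.false emb
      · push_neg at hP
        obtain ⟨emb⟩ := transfer G W (Sv ∪ (I \ J)) e e e.injective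
          (fun k => hP k) (fun k l _ => Iff.rfl)
        rw [hset] at emb
        exact hS'.false emb
    · -- some kept module vertex is outside the complementation set
      push_neg at hc
      obtain ⟨j, hjJ, hjSv⟩ := hc
      refine ⟨Sv, ⟨fun e => ?_⟩⟩
      have htwin : ∀ x ∈ {x | x ∈ I ∧ x ∉ Sv}, ∀ y ∈ {x | x ∈ I ∧ x ∉ Sv},
          ∀ w, w ≠ x → w ≠ y → ((scomp G Sv).Adj x w ↔ (scomp G Sv).Adj y w) :=
        fun x hx y hy w h1 h2 =>
          twin_scomp hmod hind hx.1 hy.1 (iff_of_false hx.2 hy.2) w h1 h2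
      have hinner : ∀ x ∈ {x | x ∈ I ∧ x ∉ Sv}, ∀ y ∈ {x | x ∈ I ∧ x ∉ Sv},
          x ≠ y → ((scomp G Sv).Adj x y ↔ False) :=
        fun x hx y hy hxy =>
          iff_of_false (inner_not_mem hind hx.1 hy.1 hx.2 hxy) not_false
      have key1 : ∀ k l : Fin 4, k ≠ l → e k ∈ {x | x ∈ I ∧ x ∉ Sv} →
          e l ∈ {x | x ∈ I ∧ x ∉ Sv} → False := by
        intro k l hkl hk hl
        refine factA k l hkl ?_
          (pull e (fun w h1 h2 => htwin (e k) hk (e l) hl w h1 h2))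
        intro h
        exact inner_not_mem hind hk.1 hl.1 hk.2
          (fun h' => hkl (e.injective h')) (e.map_rel_iff.mpr h)
      have hIJT : ∀ x, x ∈ I \ J → x ∈ {x | x ∈ I ∧ x ∉ Sv} :=
        fun x hx => ⟨hx.1, fun h => hSvnotIJ x h hx⟩
      have hjT : j ∈ {x | x ∈ I ∧ x ∉ Sv} := ⟨hJ hjJ, hjSv⟩
      have hset : {v : W | ↑v ∈ Sv} = S' := by
        ext v
        exact Subtype.val_injective.mem_set_image
      by_cases hP : ∃ k, e k ∈ I \ J
      · obtain ⟨k₀, hk₀⟩ := hP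
        have hERest : ∀ m, m ≠ k₀ → e m ∉ {x | x ∈ I ∧ x ∉ Sv} :=
          fun m hm h => key1 m k₀ hm h (hIJT _ hk₀)
        have hfresh : ∀ m, m ≠ k₀ → e m ≠ j :=
          fun m hm h => hERest m hm (by rw [h]; exact hjT)
        set σ : Fin 4 → V := fun k => if k = k₀ then j else e k with hσdef
        have hinjσ : Function.Injective σ :=
          inj_one_subst e e.injective k₀ j hfresh
        have hσ : ∀ k, σ k = e k ∨
            ((e k : V) ∈ {x | x ∈ I ∧ x ∉ Sv} ∧ σ k ∈ {x | x ∈ I ∧ x ∉ Sv}) := by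
          intro k
          by_cases h1 : k = k₀
          · refine Or.inr ⟨h1 ▸ hIJT _ hk₀, ?_⟩
            rw [hσdef]; simp only [if_pos h1]; exact hjT
          · left; rw [hσdef]; simp only [if_neg h1]
        have hWσ : ∀ k, σ k ∈ W := by
          intro k
          rw [hσdef]
          by_cases h1 : k = k₀
          · simp only [if_pos h1]; exact fun h => h.2 hjJ
          · simp only [if_neg h1]; exact fun h => hERest k h1 (hIJT _ h)
        obtain ⟨emb⟩ := transfer G W Sv e σ hinjσ hWσ
          (fun k l hkl => subst_adj htwin hinner hσ hinjσ e.injective hkl)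
        rw [hset] at emb
        exact hS'.false emb
      · push_neg at hP
        obtain ⟨emb⟩ := transfer G W Sv e e e.injective
          (fun k => hP k) (fun k l _ => Iff.rfl)
        rw [hset] at emb
        exact hS'.false emb
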